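/- Let A = ISP(M) be a finitely generated D-based quasivariety (M a finite set of finite algebras), let Ω = ⋃_{M∈M} Ω_M with each Ω_M ⊆ D(U(M), 2) satisfy (Sep)_{M,Ω}, and let the piggyback duality of the Multisorted Piggyback Duality Theorem be set up. For A in A with X = D(A), let Y = ⋃{ X_M × Ω_M : M in M }, topologized so that a base of open sets is {U × {ω} : U open in X_M, ω in Ω_M}, and define (x, ω_1) ⪯ (y, ω_2) iff (x, y) belongs to r^X for some r in R_{ω_1,ω_2}. Then: (i) (Y, T_Y) is compact and Hausdorff; (ii) ⪯ is a pre-order on Y; (iii) letting ≈ = ⪯ ∩ ⪰, the quotient (Y/≈, ⪯/≈, T_Y/≈) with the quotient topology is a Priestley space isomorphic to HU(A). -/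

import Mathlib

open FirstOrder FirstOrder.Language FirstOrder.Language.Structure

namespace CoproductsPaper

variable {L : FirstOrder.Language.{0,0}}

/-- Pointwise structure on a product of `L`-structures. -/
instance piStructure {ι : Type} (M : ι → Type) [∀ i, L.Structure (M i)] :
    L.Structure (∀ i, M i) where
  funMap f x i := funMap f fun j => x j i
  RelMap r x := ∀ i, RelMap r fun j => x j i

/-- Pointwise structure on a binary product of `L`-structures. -/
instance prodStructure {M N : Type} [L.Structure M] [L.Structure N] :
    L.Structure (M × N) where
  funMap f x := (funMap f fun j => (x j).1, funMap f fun j => (x j).2)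
  RelMap r x := RelMap r (fun j => (x j).1) ∧ RelMap r fun j => (x j).2

/-- A choice of bounded-lattice symbols in the language `L`. -/
structure DSig (L : FirstOrder.Language.{0,0}) where
  meet : L.Functions 2
  join : L.Functions 2
  bot : L.Functions 0
  top : L.Functions 0

variable (s : DSig L)

/-- The induced meet operation. -/
def dmeet {X : Type} [L.Structure X] (a b : X) : X := funMap s.meet ![a, b]
/-- The induced join operation. -/
def djoin {X : Type} [L.Structure X] (a b : X) : X := funMap s.join ![a, b]
/-- The induced bottom element. -/
def dbot (X : Type) [L.Structure X] : X := funMap s.bot ![]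
/-- The induced top element. -/
def dtop (X : Type) [L.Structure X] : X := funMap s.top ![]

/-- The induced operations make `X` a bounded distributive lattice:
this is the property of having a `D`-reduct. -/
structure IsDAlg (X : Type) [L.Structure X] : Prop where
  meet_comm : ∀ a b : X, dmeet s a b = dmeet s b a
  join_comm : ∀ a b : X, djoin s a b = djoin s b a
  meet_assoc : ∀ a b c : X, dmeet s (dmeet s a b) c = dmeet s a (dmeet s b c)
  join_assoc : ∀ a b c : X, djoin s (djoin s a b) c = djoin s a (djoin s b c)
  absorb_meet : ∀ a b : X, dmeet s a (djoin s a b) = a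
  absorb_join : ∀ a b : X, djoin s a (dmeet s a b) = a
  meet_distrib : ∀ a b c : X, dmeet s a (djoin s b c) = djoin s (dmeet s a b) (dmeet s a c)
  bot_join : ∀ a : X, djoin s (dbot s X) a = a
  top_meet : ∀ a : X, dmeet s (dtop s X) a = a

/-- A `D`-morphism from the `D`-reduct of `X` to the two-element lattice `2 = Bool`. -/
def IsBoolDHom {X : Type} [L.Structure X] (ω : X → Bool) : Prop :=
  (∀ a b : X, ω (dmeet s a b) = (ω a && ω b)) ∧
  (∀ a b : X, ω (djoin s a b) = (ω a || ω b)) ∧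
  ω (dbot s X) = false ∧ ω (dtop s X) = true

/-- A class of `L`-structures. -/
abbrev ClassOf (L : FirstOrder.Language.{0,0}) : Type 1 := (X : Type) → L.Structure X → Prop

/-- Membership in `ISP M` for a (multi-generator) family `M`:
isomorphic copies of subalgebras of products of the `M i`, i.e. structures embeddable
into a product of members of the family. -/
def ISPc {ι : Type} (Mf : ι → Type) [∀ i, L.Structure (Mf i)] : ClassOf L :=
  fun X iX => ∃ (κ : Type) (g : κ → ι),
    Nonempty (@FirstOrder.Language.Embedding L X (∀ k, Mf (g k)) iX inferInstance)

/-- Membership in `ISP M` for a single generator. -/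
def ISPc1 (M : Type) [L.Structure M] : ClassOf L :=
  fun X iX => ∃ κ : Type,
    Nonempty (@FirstOrder.Language.Embedding L X (κ → M) iX inferInstance)

/-- The separation condition `(Sep)_{M,Ω}`. -/
def SepCond {ι : Type} (Mf : ι → Type) [∀ i, L.Structure (Mf i)]
    (Ω : ∀ i, Set (Mf i → Bool)) : Prop :=
  ∀ (i : ι) (a b : Mf i), a ≠ b →
    ∃ (j : ι) (u : Mf i →[L] Mf j) (ω : Mf j → Bool), ω ∈ Ω j ∧ ω (u a) ≠ ω (u b)

/-- The separation condition `(Sep)_{M,ω}` for a single algebra and single carrier map. -/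
def SepCond1 (M : Type) [L.Structure M] (ω : M → Bool) : Prop :=
  ∀ a b : M, a ≠ b → ∃ u : M →[L] M, ω (u a) ≠ ω (u b)

/-- The bounded sublattice `(ω₁,ω₂)^{-1}(≤)` of `M × N`. -/
def piggySet {M N : Type} (ω₁ : M → Bool) (ω₂ : N → Bool) : Set (M × N) :=
  {p | ω₁ p.1 ≤ ω₂ p.2}

/-- `R_{ω₁,ω₂}`: the set of subalgebras of `M × N` that are maximal with respect to
being contained in `(ω₁,ω₂)^{-1}(≤)`. -/
def RSet {M N : Type} [L.Structure M] [L.Structure N]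
    (ω₁ : M → Bool) (ω₂ : N → Bool) : Set (L.Substructure (M × N)) :=
  {r : L.Substructure (M × N) | (r : Set (M × N)) ⊆ piggySet ω₁ ω₂ ∧
    ∀ r' : L.Substructure (M × N), (r' : Set (M × N)) ⊆ piggySet ω₁ ω₂ → r ≤ r' → r' = r}

/-- `(C, ε)` is a coproduct co-cone for the family `K` within the class `Acl`. -/
def IsCoprod (Acl : ClassOf L) {κ : Type} (K : κ → Type) [iK : ∀ k, L.Structure (K k)]
    (C : Type) [iC : L.Structure C] (ε : ∀ k, K k →[L] C) : Prop :=
  Acl C iC ∧ ∀ (B : Type) [iB : L.Structure B], Acl B iB →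
    ∀ f : ∀ k, K k →[L] B, ∃! h : C →[L] B, ∀ k, h.comp (ε k) = f k

/-- `F` is free over the class `Acl` on the generators `gen : G → F`. -/
def IsFreeOver (Acl : ClassOf L) (G : Type) (F : Type) [iF : L.Structure F]
    (gen : G → F) : Prop :=
  Acl F iF ∧ ∀ (B : Type) [iB : L.Structure B], Acl B iB →
    ∀ v : G → B, ∃! h : F →[L] B, ∀ x : G, h (gen x) = v x

/-- A bounded-lattice homomorphism between bounded lattices (unbundled). -/
def IsBLHom {P Q : Type} [Lattice P] [BoundedOrder P] [Lattice Q] [BoundedOrder Q]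
    (h : P → Q) : Prop :=
  (∀ a b : P, h (a ⊓ b) = h a ⊓ h b) ∧ (∀ a b : P, h (a ⊔ b) = h a ⊔ h b) ∧
    h ⊥ = ⊥ ∧ h ⊤ = ⊤

/-- A `D`-morphism from the `D`-reduct of the `L`-structure `X` to a bounded lattice `Q`. -/
def IsRedHom {X Q : Type} [L.Structure X] [Lattice Q] [BoundedOrder Q] (f : X → Q) : Prop :=
  (∀ a b : X, f (dmeet s a b) = f a ⊓ f b) ∧ (∀ a b : X, f (djoin s a b) = f a ⊔ f b) ∧
    f (dbot s X) = ⊥ ∧ f (dtop s X) = ⊤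

/-- A `D`-morphism from a bounded lattice `P` to the `D`-reduct of the `L`-structure `X`. -/
def IsCoRedHom {P X : Type} [Lattice P] [BoundedOrder P] [L.Structure X] (f : P → X) : Prop :=
  (∀ a b : P, f (a ⊓ b) = dmeet s (f a) (f b)) ∧ (∀ a b : P, f (a ⊔ b) = djoin s (f a) (f b)) ∧
    f ⊥ = dbot s X ∧ f ⊤ = dtop s X

/-- `(P, η)` is the coproduct in `D` of the `D`-reducts of the family `K`. -/
def IsDCoprodOfReducts {κ : Type} (K : κ → Type) [∀ k, L.Structure (K k)]
    (P : Type) [DistribLattice P] [BoundedOrder P] (η : ∀ k, K k → P) : Prop :=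
  (∀ k, IsRedHom s (η k)) ∧
  ∀ (Q : Type) [DistribLattice Q] [BoundedOrder Q] (g : ∀ k, K k → Q),
    (∀ k, IsRedHom s (g k)) →
      ∃! h : {h : P → Q // IsBLHom h}, ∀ k, (h : P → Q) ∘ η k = g k

/-- The discrete product topology on a function space. -/
def powTop (A M : Type) : TopologicalSpace (A → M) :=
  @Pi.topologicalSpace A (fun _ => M) (fun _ => ⊥)

/-- The natural topology on the hom-set `A(A, M)`, inherited from `M^A` with `M` discrete. -/
def homTop (A M : Type) [L.Structure A] [L.Structure M] : TopologicalSpace (A →[L] M) :=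
  (powTop A M).induced (fun h => (h : A → M))

/-- The topology on `HU(A) = D(U(A), 2)`, inherited from `2^A`. -/
def huTop (X : Type) [L.Structure X] : TopologicalSpace {f : X → Bool // IsBoolDHom s f} :=
  (powTop X Bool).induced Subtype.val


/-- A bounded sublattice of the `D`-reduct of `X`: a subset closed under the induced
meet and join and containing the bounds. -/
def IsBddSublattice (s : DSig L) {X : Type} [L.Structure X] (Ls : Set X) : Prop :=
  (∀ a ∈ Ls, ∀ b ∈ Ls, dmeet s a b ∈ Ls) ∧ (∀ a ∈ Ls, ∀ b ∈ Ls, djoin s a b ∈ Ls) ∧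
    dbot s X ∈ Ls ∧ dtop s X ∈ Ls

/-- `B` is subdirectly irreducible relative to the class `Acl`: whenever `B` is
(isomorphic to) a subdirect product of algebras in `Acl`, one of the projections is
already an isomorphism. -/
def IsSIrel (Acl : ClassOf L) (B : Type) [iB : L.Structure B] : Prop :=
  Acl B iB ∧
  ∀ (κ : Type) (Cf : κ → Type) [iC : ∀ k, L.Structure (Cf k)],
    (∀ k, Acl (Cf k) (iC k)) →
    ∀ e : B ↪[L] (∀ k, Cf k),
      (∀ k, Function.Surjective (fun b : B => e b k)) →
      ∃ k, Function.Bijective (fun b : B => e b k)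

/-- Two classes of `L`-structures coincide. -/
def ClassEq (Acl Bcl : ClassOf L) : Prop :=
  ∀ (X : Type) (iX : L.Structure X), Acl X iX ↔ Bcl X iX

/-- The forgetful functor `U : A → D` of the `D`-based class `Acl` satisfies (S):
for each set `K ⊆ A`, the canonical `D`-homomorphism
`χ_K : ∐_D U(K) → U(∐_A K)` (i.e. the unique `D`-morphism commuting with the
coproduct injections) is surjective. -/
def SatisfiesS (s : DSig L) (Acl : ClassOf L) : Prop :=
  ∀ (κ : Type) (K : κ → Type) [iK : ∀ k, L.Structure (K k)],
    (∀ k, Acl (K k) (iK k)) →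
    ∀ (C : Type) [iC : L.Structure C] (ε : ∀ k, K k →[L] C), IsCoprod Acl K C ε →
    ∀ (P : Type) [DistribLattice P] [BoundedOrder P] (η : ∀ k, K k → P),
      IsDCoprodOfReducts s K P η →
    ∀ χ : P → C, IsCoRedHom s χ → (∀ k, χ ∘ η k = ⇑(ε k)) → Function.Surjective χ

/-- The forgetful functor `U : A → D` of the `D`-based class `Acl` satisfies (E):
for each set `K ⊆ A`, the canonical `D`-homomorphism
`χ_K : ∐_D U(K) → U(∐_A K)` is injective. -/
def SatisfiesE (s : DSig L) (Acl : ClassOf L) : Prop :=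
  ∀ (κ : Type) (K : κ → Type) [iK : ∀ k, L.Structure (K k)],
    (∀ k, Acl (K k) (iK k)) →
    ∀ (C : Type) [iC : L.Structure C] (ε : ∀ k, K k →[L] C), IsCoprod Acl K C ε →
    ∀ (P : Type) [DistribLattice P] [BoundedOrder P] (η : ∀ k, K k → P),
      IsDCoprodOfReducts s K P η →
    ∀ χ : P → C, IsCoRedHom s χ → (∀ k, χ ∘ η k = ⇑(ε k)) → Function.Injective χ


section AuxLemmas

/-- The projection from a pointwise product structure is an `L`-homomorphism. -/
def piProjHom {ι : Type} (M : ι → Type) [∀ i, L.Structure (M i)] (i : ι) :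
    (∀ j, M j) →[L] M i where
  toFun p := p i
  map_fun' := fun _ _ => rfl
  map_rel' := fun _ _ h => h i

lemma hom_dmeet {M N : Type} [L.Structure M] [L.Structure N] (h : M →[L] N) (a b : M) :
    h (dmeet s a b) = dmeet s (h a) (h b) := by
  show h (funMap s.meet ![a, b]) = funMap s.meet ![h a, h b]
  rw [h.map_fun]; congr 1; funext i; fin_cases i <;> rfl

lemma hom_djoin {M N : Type} [L.Structure M] [L.Structure N] (h : M →[L] N) (a b : M) :
    h (djoin s a b) = djoin s (h a) (h b) := by
  show h (funMap s.join ![a, b]) = funMap s.join ![h a, h b]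
  rw [h.map_fun]; congr 1; funext i; fin_cases i <;> rfl

lemma hom_dbot {M N : Type} [L.Structure M] [L.Structure N] (h : M →[L] N) :
    h (dbot s M) = dbot s N := by
  show h (funMap s.bot ![]) = funMap s.bot ![]
  rw [h.map_fun]; congr 1; funext i; exact i.elim0

lemma hom_dtop {M N : Type} [L.Structure M] [L.Structure N] (h : M →[L] N) :
    h (dtop s M) = dtop s N := by
  show h (funMap s.top ![]) = funMap s.top ![]
  rw [h.map_fun]; congr 1; funext i; exact i.elim0

lemma comp_isBoolDHom {M N : Type} [L.Structure M] [L.Structure N]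
    {omg : N → Bool} (homg : IsBoolDHom s omg) (h : M →[L] N) :
    IsBoolDHom s (fun a => omg (h a)) :=
  ⟨fun a b => by show omg (h (dmeet s a b)) = _; rw [hom_dmeet]; exact homg.1 _ _,
   fun a b => by show omg (h (djoin s a b)) = _; rw [hom_djoin]; exact homg.2.1 _ _,
   by show omg (h (dbot s M)) = _; rw [hom_dbot]; exact homg.2.2.1,
   by show omg (h (dtop s M)) = _; rw [hom_dtop]; exact homg.2.2.2⟩

/-- The "double graph" `{(x a, y a) : a ∈ A}` of a pair of homomorphisms, as a substructure
of the product. -/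
def pairRange {A M N : Type} [L.Structure A] [L.Structure M] [L.Structure N]
    (x : A →[L] M) (y : A →[L] N) : L.Substructure (M × N) where
  carrier := Set.range fun a => (x a, y a)
  fun_mem := by
    intro n f t ht
    choose g hg using ht
    refine ⟨funMap f g, ?_⟩
    have hfm : funMap f t = (funMap f fun j => (t j).1, funMap f fun j => (t j).2) := rfl
    rw [hfm]
    refine Prod.ext ?_ ?_
    · show x (funMap f g) = _
      rw [x.map_fun]; exact congrArg (funMap f) (funext fun j => congrArg Prod.fst (hg j))
    · show y (funMap f g) = _
      rw [y.map_fun]; exact congrArg (funMap f) (funext fun j => congrArg Prod.snd (hg j))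

lemma exists_RSet_ext {M N : Type} [L.Structure M] [L.Structure N] [Finite M] [Finite N]
    (om1 : M → Bool) (om2 : N → Bool) (S : L.Substructure (M × N))
    (hS : (S : Set (M × N)) ⊆ piggySet om1 om2) :
    ∃ r ∈ RSet (L := L) om1 om2, S ≤ r := by
  haveI : Finite (Set (M × N)) :=
    Finite.of_equiv ((M × N) → Prop) ⟨id, id, fun _ => rfl, fun _ => rfl⟩
  haveI : Finite (L.Substructure (M × N)) :=
    Finite.of_injective (fun r => (r : Set (M × N))) SetLike.coe_injective
  obtain ⟨r, hr, hmax⟩ := Set.Finite.exists_maximalFor id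
    {r : L.Substructure (M × N) | (r : Set (M × N)) ⊆ piggySet om1 om2 ∧ S ≤ r}
    (Set.toFinite _) ⟨S, hS, le_rfl⟩
  exact ⟨r, ⟨hr.1, fun r' hr' hle => le_antisymm (hmax ⟨hr', hr.2.trans hle⟩ hle) hle⟩, hr.2⟩

lemma isClosed_range_homCoe (A M : Type) [L.Structure A] [L.Structure M] :
    @IsClosed (A → M) (powTop A M) (Set.range (fun h : A →[L] M => (h : A → M))) := by
  letI : TopologicalSpace M := ⊥
  haveI : DiscreteTopology M := ⟨rfl⟩
  letI tP : TopologicalSpace (A → M) := Pi.topologicalSpace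
  show @IsClosed (A → M) tP (Set.range (fun h : A →[L] M => (h : A → M)))
  have hrange : Set.range (fun h : A →[L] M => (h : A → M)) =
      ({g : A → M | ∀ (n : ℕ) (F : L.Functions n) (xs : Fin n → A),
          g (funMap F xs) = funMap F (g ∘ xs)} ∩
       {g : A → M | ∀ (n : ℕ) (r : L.Relations n) (xs : Fin n → A),
          RelMap r xs → RelMap r (g ∘ xs)}) := by
    ext g
    constructor
    · rintro ⟨h, rfl⟩
      exact ⟨fun n F xs => h.map_fun F xs, fun n r xs hr => h.map_rel r xs hr⟩
    · rintro ⟨h1, h2⟩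
      exact ⟨⟨g, fun {n} F xs => h1 n F xs, fun {n} r xs hr => h2 n r xs hr⟩, rfl⟩
  rw [hrange]
  have hc1 : ∀ (n : ℕ) (xs : Fin n → A), Continuous fun g : A → M => g ∘ xs :=
    fun n xs => continuous_pi fun k => continuous_apply (xs k)
  refine IsClosed.inter ?_ ?_
  · have heq : {g : A → M | ∀ (n : ℕ) (F : L.Functions n) (xs : Fin n → A),
        g (funMap F xs) = funMap F (g ∘ xs)} =
        ⋂ (n : ℕ), ⋂ (F : L.Functions n), ⋂ (xs : Fin n → A),
          {g : A → M | g (funMap F xs) = funMap F (g ∘ xs)} := by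
      ext g
      simp only [Set.mem_iInter, Set.mem_setOf_eq]
    rw [heq]
    refine isClosed_iInter fun n => isClosed_iInter fun F => isClosed_iInter fun xs => ?_
    exact isClosed_eq (continuous_apply (funMap F xs))
      ((continuous_of_discreteTopology
        (f := fun v : Fin n → M => funMap F v)).comp (hc1 n xs))
  · have heq : {g : A → M | ∀ (n : ℕ) (r : L.Relations n) (xs : Fin n → A),
        RelMap r xs → RelMap r (g ∘ xs)} =
        ⋂ (n : ℕ), ⋂ (r : L.Relations n), ⋂ (xs : Fin n → A),
          {g : A → M | RelMap r xs → RelMap r (g ∘ xs)} := by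
      ext g
      simp only [Set.mem_iInter, Set.mem_setOf_eq]
    rw [heq]
    refine isClosed_iInter fun n => isClosed_iInter fun r => isClosed_iInter fun xs => ?_
    by_cases hrel : RelMap r xs
    · have heq2 : {g : A → M | RelMap r xs → RelMap r (g ∘ xs)} =
          (fun g : A → M => g ∘ xs) ⁻¹' {v : Fin n → M | RelMap r v} := by
        ext g
        simp [hrel]
      rw [heq2]
      exact IsClosed.preimage (hc1 n xs) (isClosed_discrete _)
    · have heq2 : {g : A → M | RelMap r xs → RelMap r (g ∘ xs)} = Set.univ := by
        ext g
        simp [hrel]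
      rw [heq2]
      exact isClosed_univ

lemma compactSpace_homTop (A M : Type) [L.Structure A] [L.Structure M] [Finite M] :
    @CompactSpace (A →[L] M) (homTop A M) := by
  letI : TopologicalSpace M := ⊥
  haveI : DiscreteTopology M := ⟨rfl⟩
  letI tP : TopologicalSpace (A → M) := Pi.topologicalSpace
  letI tH : TopologicalSpace (A →[L] M) := tP.induced (fun h => (h : A → M))
  have hind : @Topology.IsInducing _ _ tH tP (fun h : A →[L] M => (h : A → M)) := ⟨rfl⟩
  have hcl : @IsClosed (A → M) tP (Set.range (fun h : A →[L] M => (h : A → M))) :=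
    isClosed_range_homCoe A M
  have hcomp : IsCompact (Set.range (fun h : A →[L] M => (h : A → M))) := hcl.isCompact
  have huniv : @IsCompact _ tH Set.univ := by
    rw [hind.isCompact_iff, Set.image_univ]
    exact hcomp
  exact @CompactSpace.mk _ tH huniv

lemma t2Space_homTop (A M : Type) [L.Structure A] [L.Structure M] :
    @T2Space (A →[L] M) (homTop A M) := by
  letI : TopologicalSpace M := ⊥
  haveI : DiscreteTopology M := ⟨rfl⟩
  letI tP : TopologicalSpace (A → M) := Pi.topologicalSpace
  letI tH : TopologicalSpace (A →[L] M) := tP.induced (fun h => (h : A → M))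
  have hemb : @Topology.IsEmbedding _ _ tH tP (fun h : A →[L] M => (h : A → M)) :=
    ⟨⟨rfl⟩, DFunLike.coe_injective⟩
  exact hemb.t2Space

end AuxLemmas

section Statement2

variable (L₀ : FirstOrder.Language.{0,0})
variable {ι : Type} (Mf : ι → Type) [∀ i, L₀.Structure (Mf i)]
  (Ω : ∀ i, Set (Mf i → Bool)) (A : Type) [L₀.Structure A]

/-- The underlying set of `Y = ⋃ { X_M × Ω_M : M ∈ M }`, where `X_M = A(A,M)` is the
`M`-th sort of the multisorted natural dual `D(A)`. -/
def YSet : Type := Σ i : ι, ((A →[L₀] Mf i) × ↥(Ω i))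

/-- The topology `T_Y` on `Y`: on each sort it is the product of the natural topology
on `X_M = A(A,M)` (inherited from `M^A`, `M` discrete) with the discrete topology on
`Ω_M`; a base of open sets is given by the sets `U × {ω}`. -/
def yTop : TopologicalSpace (YSet L₀ Mf Ω A) :=
  ⨆ i : ι, TopologicalSpace.coinduced (Sigma.mk i)
    (@instTopologicalSpaceProd _ _ (homTop (L := L₀) A (Mf i)) ⊥)

/-- The relation `⪯` on `Y`: `(x,ω₁) ⪯ (y,ω₂)` iff `(x,y) ∈ r^X` for some
`r ∈ R_{ω₁,ω₂}`. -/
def yle (p q : YSet L₀ Mf Ω A) : Prop :=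
  ∃ r ∈ RSet (L := L₀) (p.2.2 : Mf p.1 → Bool) (q.2.2 : Mf q.1 → Bool),
    ∀ a : A, (p.2.1 a, q.2.1 a) ∈ r

/-- The equivalence relation `≈ = ⪯ ∩ ⪰` determined by the pre-order `⪯`. -/
def yequiv (p q : YSet L₀ Mf Ω A) : Prop :=
  yle L₀ Mf Ω A p q ∧ yle L₀ Mf Ω A q p

/-- The quotient `Y/≈`. -/
def YQuot : Type := Quot (yequiv L₀ Mf Ω A)

/-- The quotient topology `T_Y/≈` on `Y/≈`. -/
def yQuotTop : TopologicalSpace (YQuot L₀ Mf Ω A) :=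
  (yTop L₀ Mf Ω A).coinduced (Quot.mk (yequiv L₀ Mf Ω A))

/-- The quotient `⪯/≈` of the pre-order `⪯` on `Y/≈`. -/
def yQuotLe (u v : YQuot L₀ Mf Ω A) : Prop :=
  ∃ p q : YSet L₀ Mf Ω A,
    u = Quot.mk (yequiv L₀ Mf Ω A) p ∧ v = Quot.mk (yequiv L₀ Mf Ω A) q ∧
      yle L₀ Mf Ω A p q

end Statement2

/-- Let `A = ISP(M)` be a finitely generated `D`-based quasivariety, with carrier maps `Ω`
satisfying `(Sep)_{M,Ω}`, and let `A ∈ A`.  Then for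
`Y = ⋃ { X_M × Ω_M : M ∈ M }` (where `X = D(A)`), topologized as above and pre-ordered
by `(x,ω₁) ⪯ (y,ω₂) ↔ (x,y) ∈ r^X` for some `r ∈ R_{ω₁,ω₂}`:
(i) `(Y, T_Y)` is compact and Hausdorff;
(ii) `⪯` is a pre-order (reflexive and transitive) on `Y`;
(iii) with `≈ = ⪯ ∩ ⪰`, the quotient `(Y/≈, ⪯/≈, T_Y/≈)` is a Priestley space
(its order is a partial order, the space is compact, and it is totally
order-disconnected) isomorphic to `HU(A)`, via a homeomorphism which is also an
order-isomorphism. -/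
theorem Y_quotient_is_priestley_dual
    (L : FirstOrder.Language.{0,0}) (s : DSig L)
    (ι : Type) [Fintype ι] (Mf : ι → Type) [∀ i, L.Structure (Mf i)] [∀ i, Fintype (Mf i)]
    (hDbased : ∀ (X : Type) (iX : L.Structure X), ISPc (L := L) Mf X iX → IsDAlg s X)
    (Ω : ∀ i, Set (Mf i → Bool)) (hΩ : ∀ i, ∀ ω ∈ Ω i, IsBoolDHom s ω)
    (hsep : SepCond (L := L) Mf Ω)
    (A : Type) [iA : L.Structure A] (hA : ISPc (L := L) Mf A iA) :
    -- (i) (Y, T_Y) is compact and Hausdorff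
    (@CompactSpace (YSet L Mf Ω A) (yTop L Mf Ω A)) ∧
    (@T2Space (YSet L Mf Ω A) (yTop L Mf Ω A)) ∧
    -- (ii) ⪯ is a pre-order on Y
    (∀ p, yle L Mf Ω A p p) ∧
    (∀ p q r, yle L Mf Ω A p q → yle L Mf Ω A q r → yle L Mf Ω A p r) ∧
    -- (iii) (Y/≈, ⪯/≈, T_Y/≈) is a Priestley space isomorphic to HU(A)
    ((∀ u, yQuotLe L Mf Ω A u u) ∧
     (∀ u v w, yQuotLe L Mf Ω A u v → yQuotLe L Mf Ω A v w → yQuotLe L Mf Ω A u w) ∧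
     (∀ u v, yQuotLe L Mf Ω A u v → yQuotLe L Mf Ω A v u → u = v) ∧
     (@CompactSpace (YQuot L Mf Ω A) (yQuotTop L Mf Ω A)) ∧
     (∀ u v : YQuot L Mf Ω A, ¬ yQuotLe L Mf Ω A u v →
        ∃ U : Set (YQuot L Mf Ω A),
          @IsClopen _ (yQuotTop L Mf Ω A) U ∧
          (∀ w w', yQuotLe L Mf Ω A w w' → w ∈ U → w' ∈ U) ∧
          u ∈ U ∧ v ∉ U) ∧
     ∃ e : @Homeomorph (YQuot L Mf Ω A) {f : A → Bool // IsBoolDHom s f}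
          (yQuotTop L Mf Ω A) (huTop s A),
        ∀ p q : YSet L Mf Ω A,
          (yle L Mf Ω A p q ↔
            ((e (Quot.mk _ p) : A → Bool) ≤ (e (Quot.mk _ q) : A → Bool)))) := by
  classical
  -- the piggyback evaluation map
  let φ : YSet L Mf Ω A → A → Bool := fun p a => (p.2.2 : Mf p.1 → Bool) (p.2.1 a)
  have hφD : ∀ p, IsBoolDHom s (φ p) := fun p => comp_isBoolDHom s (hΩ p.1 _ p.2.2.2) p.2.1
  -- the key order-theoretic characterisation of ⪯
  have hE : ∀ p q : YSet L Mf Ω A, yle L Mf Ω A p q ↔ ∀ a, φ p a ≤ φ q a := by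
    intro p q
    constructor
    · rintro ⟨r, hr, hmem⟩ a
      exact hr.1 (hmem a)
    · intro h
      obtain ⟨r, hrR, hSr⟩ := exists_RSet_ext (L := L) (↑p.2.2) (↑q.2.2)
        (pairRange p.2.1 q.2.1) (by rintro z ⟨a, rfl⟩; exact h a)
      exact ⟨r, hrR, fun a => hSr ⟨a, rfl⟩⟩
  -- separation bootstrapped from (Sep)
  have hsep' : ∀ a b : A, dmeet s a b ≠ a →
      ∃ (i : ι) (x : A →[L] Mf i) (ω : Mf i → Bool),
        ω ∈ Ω i ∧ ω (x a) = true ∧ ω (x b) = false := by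
    intro a b hab
    obtain ⟨κ, g, ⟨e⟩⟩ := hA
    have h2 : ∃ k, e (dmeet s a b) k ≠ e a k := by
      by_contra hcc
      push_neg at hcc
      exact hab (e.injective (funext hcc))
    obtain ⟨k, hk⟩ := h2
    let π : A →[L] Mf (g k) := (piProjHom _ k).comp e.toHom
    have hne : dmeet s (π a) (π b) ≠ π a := by
      rw [← hom_dmeet s π]
      exact hk
    obtain ⟨j, u, ω, hω, hωne⟩ := hsep (g k) _ _ hne
    have hu : ω (u (dmeet s (π a) (π b))) = (ω (u (π a)) && ω (u (π b))) := by
      rw [hom_dmeet s u]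
      exact (hΩ j ω hω).1 _ _
    have hb2 : ω (u (π a)) = true ∧ ω (u (π b)) = false := by
      rw [hu] at hωne
      cases h1 : ω (u (π a)) <;> cases h2 : ω (u (π b)) <;> simp_all
    exact ⟨j, u.comp π, ω, hω, hb2.1, hb2.2⟩
  -- folding meets and joins
  have meet_fold : ∀ (g : A → Bool), (∀ a b, g (dmeet s a b) = (g a && g b)) →
      g (dtop s A) = true → ∀ l : List A, g (l.foldr (dmeet s) (dtop s A)) = l.all g := by
    intro g hm ht l
    induction l with
    | nil => exact ht
    | cons a l ih => rw [List.foldr_cons, hm, ih, List.all_cons]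
  have join_fold : ∀ (g : A → Bool), (∀ a b, g (djoin s a b) = (g a || g b)) →
      g (dbot s A) = false → ∀ l : List A, g (l.foldr (djoin s) (dbot s A)) = l.any g := by
    intro g hm ht l
    induction l with
    | nil => exact ht
    | cons a l ih => rw [List.foldr_cons, hm, ih, List.any_cons]
  -- density: every D-morphism agrees with a piggyback one on any finite set
  have hdense : ∀ (f : A → Bool), IsBoolDHom s f → ∀ S : Finset A,
      ∃ p : YSet L Mf Ω A, ∀ a ∈ S, φ p a = f a := by
    intro f hf S
    set l1 := S.toList.filter (fun a => f a) with hl1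
    set l0 := S.toList.filter (fun a => !(f a)) with hl0
    set a0 := l1.foldr (dmeet s) (dtop s A) with ha0
    set b0 := l0.foldr (djoin s) (dbot s A) with hb0
    have hfa0 : f a0 = true := by
      rw [ha0, meet_fold f hf.1 hf.2.2.2, List.all_eq_true]
      intro a ha
      exact (List.mem_filter.mp ha).2
    have hfb0 : f b0 = false := by
      rw [hb0, join_fold f hf.2.1 hf.2.2.1, List.any_eq_false]
      intro a ha
      have h2 := (List.mem_filter.mp ha).2
      simp only [Bool.not_eq_true'] at h2 ⊢
      simp [h2]
    have hne : dmeet s a0 b0 ≠ a0 := by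
      intro h
      have h3 := hf.1 a0 b0
      rw [h, hfa0, hfb0] at h3
      simp at h3
    obtain ⟨i, x, ω, hω, h1, h0⟩ := hsep' a0 b0 hne
    have hg : IsBoolDHom s (fun a => ω (x a)) := comp_isBoolDHom s (hΩ i ω hω) x
    have hall : l1.all (fun a => ω (x a)) = true := by
      rw [← meet_fold _ hg.1 hg.2.2.2 l1, ← ha0]
      exact h1
    have hany : l0.any (fun a => ω (x a)) = false := by
      rw [← join_fold _ hg.2.1 hg.2.2.1 l0, ← hb0]
      exact h0
    refine ⟨⟨i, x, ⟨ω, hω⟩⟩, ?_⟩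
    intro a ha
    show ω (x a) = f a
    by_cases hfa : f a = true
    · rw [hfa]
      exact List.all_eq_true.mp hall a
        (List.mem_filter.mpr ⟨Finset.mem_toList.mpr ha, by simp [hfa]⟩)
    · have hfa' : f a = false := by simpa using hfa
      rw [hfa']
      have h4 := List.any_eq_false.mp hany a
        (List.mem_filter.mpr ⟨Finset.mem_toList.mpr ha, by simp [hfa']⟩)
      simpa using h4
  -- (i) compactness and Hausdorffness of Y
  have hYc : @CompactSpace (YSet L Mf Ω A) (yTop L Mf Ω A) := by
    letI : ∀ i, TopologicalSpace (A →[L] Mf i) := fun i => homTop A (Mf i)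
    letI : ∀ i, TopologicalSpace ↥(Ω i) := fun i => ⊥
    haveI : ∀ i, CompactSpace (A →[L] Mf i) := fun i => compactSpace_homTop A (Mf i)
    haveI : ∀ i, CompactSpace ↥(Ω i) := fun i => Finite.compactSpace
    have h : CompactSpace ((i : ι) × ((A →[L] Mf i) × ↥(Ω i))) := inferInstance
    exact h
  have hYt2 : @T2Space (YSet L Mf Ω A) (yTop L Mf Ω A) := by
    letI : ∀ i, TopologicalSpace (A →[L] Mf i) := fun i => homTop A (Mf i)
    letI : ∀ i, TopologicalSpace ↥(Ω i) := fun i => ⊥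
    haveI : ∀ i, T2Space (A →[L] Mf i) := fun i => t2Space_homTop A (Mf i)
    haveI : ∀ i, DiscreteTopology ↥(Ω i) := fun i => ⟨rfl⟩
    have h : T2Space ((i : ι) × ((A →[L] Mf i) × ↥(Ω i))) := inferInstance
    exact h
  -- pointwise continuity of the evaluation maps
  have hφcont : ∀ a : A, @Continuous _ _ (yTop L Mf Ω A) ⊥ (fun p => φ p a) := by
    intro a
    letI : ∀ i, TopologicalSpace (Mf i) := fun i => ⊥
    haveI : ∀ i, DiscreteTopology (Mf i) := fun i => ⟨rfl⟩
    letI tPi : ∀ i, TopologicalSpace (A → Mf i) := fun i => Pi.topologicalSpace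
    letI tH : ∀ i, TopologicalSpace (A →[L] Mf i) :=
      fun i => (tPi i).induced (fun h => (h : A → Mf i))
    letI : ∀ i, TopologicalSpace ↥(Ω i) := fun i => ⊥
    haveI : ∀ i, DiscreteTopology ↥(Ω i) := fun i => ⟨rfl⟩
    letI : TopologicalSpace Bool := ⊥
    haveI : DiscreteTopology Bool := ⟨rfl⟩
    have key : ∀ i, Continuous
        (fun z : (A →[L] Mf i) × ↥(Ω i) => (z.2 : Mf i → Bool) ((z.1 : A → Mf i) a)) := by
      intro i
      have c1 : Continuous
          (fun z : (A →[L] Mf i) × ↥(Ω i) => (((z.1 : A → Mf i) a), z.2)) :=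
        ((continuous_apply a).comp (continuous_induced_dom.comp continuous_fst)).prodMk
          continuous_snd
      exact (continuous_of_discreteTopology
        (f := fun w : Mf i × ↥(Ω i) => (w.2 : Mf i → Bool) w.1)).comp c1
    exact continuous_sigma key
  -- surjectivity of the piggyback map, via compactness
  have hsurj : ∀ f : A → Bool, IsBoolDHom s f → ∃ p : YSet L Mf Ω A, ∀ a, φ p a = f a := by
    intro f hf
    letI tY : TopologicalSpace (YSet L Mf Ω A) := yTop L Mf Ω A
    letI : TopologicalSpace Bool := ⊥
    haveI : DiscreteTopology Bool := ⟨rfl⟩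
    haveI := hYc
    have hZc : ∀ a : A, IsClosed {p : YSet L Mf Ω A | φ p a = f a} := fun a =>
      IsClosed.preimage (hφcont a) (isClosed_discrete {f a})
    by_contra hcon
    push_neg at hcon
    have hempty : (Set.univ : Set (YSet L Mf Ω A)) ∩ ⋂ a, {p | φ p a = f a} = ∅ := by
      ext p
      simp only [Set.mem_inter_iff, Set.mem_univ, true_and, Set.mem_iInter,
        Set.mem_setOf_eq, Set.mem_empty_iff_false, iff_false, not_forall]
      exact hcon p
    obtain ⟨t, ht⟩ := isCompact_iff_finite_subfamily_closed.mp isCompact_univ _ hZc hempty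
    obtain ⟨p, hp⟩ := hdense f hf t
    have hmem : p ∈ (Set.univ : Set (YSet L Mf Ω A)) ∩ ⋂ a ∈ t, {p | φ p a = f a} := by
      refine ⟨trivial, ?_⟩
      simp only [Set.mem_iInter, Set.mem_setOf_eq]
      exact hp
    rw [ht] at hmem
    exact hmem
  -- quotient setup
  let φ' : YSet L Mf Ω A → {f : A → Bool // IsBoolDHom s f} := fun p => ⟨φ p, hφD p⟩
  have hsound : ∀ p q, yequiv L Mf Ω A p q → φ' p = φ' q := fun p q h =>
    Subtype.ext (funext fun a => le_antisymm ((hE p q).1 h.1 a) ((hE q p).1 h.2 a))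
  let ebar : YQuot L Mf Ω A → {f : A → Bool // IsBoolDHom s f} := Quot.lift φ' hsound
  have hmk : ∀ p, ebar (Quot.mk (yequiv L Mf Ω A) p) = φ' p := fun _ => rfl
  have hmkv : ∀ p, (ebar (Quot.mk (yequiv L Mf Ω A) p)).1 = φ p :=
    fun p => congrArg Subtype.val (hmk p)
  have hinj : Function.Injective ebar := by
    intro u v huv
    obtain ⟨p, rfl⟩ := Quot.exists_rep u
    obtain ⟨q, rfl⟩ := Quot.exists_rep v
    rw [hmk p, hmk q] at huv
    have hpq : φ p = φ q := congrArg Subtype.val huv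
    exact Quot.sound ⟨(hE p q).2 fun a => (congrFun hpq a).le,
      (hE q p).2 fun a => (congrFun hpq a).ge⟩
  have hsurj' : Function.Surjective ebar := by
    intro f
    obtain ⟨p, hp⟩ := hsurj f.1 f.2
    refine ⟨Quot.mk _ p, ?_⟩
    rw [hmk p]
    have hval : φ p = f.1 := funext hp
    exact Subtype.ext hval
  have hbij : Function.Bijective ebar := ⟨hinj, hsurj'⟩
  have hQle : ∀ u v, yQuotLe L Mf Ω A u v ↔ ∀ a, (ebar u).1 a ≤ (ebar v).1 a := by
    intro u v
    constructor
    · rintro ⟨p, q, rfl, rfl, hle⟩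
      intro a
      rw [hmkv p, hmkv q]
      exact (hE p q).1 hle a
    · intro h
      obtain ⟨p, rfl⟩ := Quot.exists_rep u
      obtain ⟨q, rfl⟩ := Quot.exists_rep v
      refine ⟨p, q, rfl, rfl, (hE p q).2 fun a => ?_⟩
      have h2 := h a
      rw [hmkv p, hmkv q] at h2
      exact h2
  -- continuity of the comparison map
  have hecont : @Continuous _ _ (yQuotTop L Mf Ω A) (huTop s A) ebar := by
    letI tY : TopologicalSpace (YSet L Mf Ω A) := yTop L Mf Ω A
    letI : TopologicalSpace Bool := ⊥
    letI tP : TopologicalSpace (A → Bool) := Pi.topologicalSpace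
    letI tHU : TopologicalSpace {f : A → Bool // IsBoolDHom s f} := tP.induced Subtype.val
    show @Continuous _ _ (tY.coinduced (Quot.mk (yequiv L Mf Ω A))) tHU ebar
    refine continuous_coinduced_dom.mpr ?_
    refine continuous_induced_rng.mpr ?_
    have hcoe : (Subtype.val ∘ ebar ∘ Quot.mk (yequiv L Mf Ω A)) = φ :=
      funext fun p => hmkv p
    show @Continuous _ _ tY tP (Subtype.val ∘ ebar ∘ Quot.mk (yequiv L Mf Ω A))
    rw [hcoe]
    exact continuous_pi fun a => hφcont a
  have hHUt2 : @T2Space _ (huTop s A) := by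
    letI : TopologicalSpace Bool := ⊥
    haveI : DiscreteTopology Bool := ⟨rfl⟩
    letI tP : TopologicalSpace (A → Bool) := Pi.topologicalSpace
    letI tHU : TopologicalSpace {f : A → Bool // IsBoolDHom s f} := tP.induced Subtype.val
    have hemb : @Topology.IsEmbedding _ _ tHU tP Subtype.val := ⟨⟨rfl⟩, Subtype.val_injective⟩
    exact hemb.t2Space
  have hQc : @CompactSpace (YQuot L Mf Ω A) (yQuotTop L Mf Ω A) := by
    letI tY : TopologicalSpace (YSet L Mf Ω A) := yTop L Mf Ω A
    letI tQ : TopologicalSpace (YQuot L Mf Ω A) := tY.coinduced (Quot.mk (yequiv L Mf Ω A))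
    haveI := hYc
    have hcontmk : @Continuous _ _ tY tQ (Quot.mk (yequiv L Mf Ω A)) := continuous_coinduced_rng
    have h1 : IsCompact (Set.range (Quot.mk (yequiv L Mf Ω A))) := isCompact_range hcontmk
    have h2 : Set.range (Quot.mk (yequiv L Mf Ω A)) = Set.univ :=
      Set.range_eq_univ.mpr fun u => Quot.exists_rep u
    exact @CompactSpace.mk _ tQ (h2 ▸ h1)
  -- total order-disconnectedness
  have hdisc : ∀ u v, ¬ yQuotLe L Mf Ω A u v →
      ∃ U : Set (YQuot L Mf Ω A), @IsClopen _ (yQuotTop L Mf Ω A) U ∧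
        (∀ w w', yQuotLe L Mf Ω A w w' → w ∈ U → w' ∈ U) ∧ u ∈ U ∧ v ∉ U := by
    intro u v huv
    have hna : ¬ ∀ a, (ebar u).1 a ≤ (ebar v).1 a := fun h => huv ((hQle u v).2 h)
    push_neg at hna
    obtain ⟨a, ha⟩ := hna
    have ha' : ¬ ((ebar u).1 a ≤ (ebar v).1 a) := not_le.mpr ha
    have hb : (ebar u).1 a = true ∧ (ebar v).1 a = false := by
      constructor
      · cases h1 : (ebar u).1 a
        · exact absurd (by rw [h1]; exact Bool.false_le _) ha'
        · rfl
      · cases h2 : (ebar v).1 a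
        · rfl
        · exact absurd (by rw [h2]; exact Bool.le_true _) ha' 
    refine ⟨{w | (ebar w).1 a = true}, ?_, ?_, hb.1, by simp [hb.2]⟩
    · letI tQ : TopologicalSpace (YQuot L Mf Ω A) := yQuotTop L Mf Ω A
      letI : TopologicalSpace Bool := ⊥
      haveI : DiscreteTopology Bool := ⟨rfl⟩
      letI tP : TopologicalSpace (A → Bool) := Pi.topologicalSpace
      letI tHU : TopologicalSpace {f : A → Bool // IsBoolDHom s f} := tP.induced Subtype.val
      have hval : @Continuous _ _ tHU tP Subtype.val := continuous_induced_dom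
      have hc : @Continuous _ _ tQ ⊥ (fun w => (ebar w).1 a) :=
        (continuous_apply a).comp (hval.comp hecont)
      have hUeq : {w : YQuot L Mf Ω A | (ebar w).1 a = true} =
          (fun w => (ebar w).1 a) ⁻¹' {true} := rfl
      rw [hUeq]
      exact ⟨IsClosed.preimage hc (isClosed_discrete {true}),
        IsOpen.preimage hc (isOpen_discrete {true})⟩
    · intro w w' hle hw
      have h5 := (hQle w w').1 hle a
      have hw' : (ebar w).1 a = true := hw
      rw [hw'] at h5
      exact le_antisymm (Bool.le_true _) h5
  refine ⟨hYc, hYt2,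
    fun p => (hE p p).2 fun a => le_rfl,
    fun p q r h1 h2 => (hE p r).2 fun a => le_trans ((hE p q).1 h1 a) ((hE q r).1 h2 a),
    fun u => (hQle u u).2 fun a => le_rfl,
    fun u v w h1 h2 => (hQle u w).2 fun a =>
      le_trans ((hQle u v).1 h1 a) ((hQle v w).1 h2 a),
    fun u v h1 h2 => hinj (Subtype.ext (funext fun a =>
      le_antisymm ((hQle u v).1 h1 a) ((hQle v u).1 h2 a))),
    hQc, hdisc, ?_⟩
  letI tQ : TopologicalSpace (YQuot L Mf Ω A) := yQuotTop L Mf Ω A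
  letI tHU : TopologicalSpace {f : A → Bool // IsBoolDHom s f} := huTop s A
  haveI := hQc
  haveI := hHUt2
  let eqv : YQuot L Mf Ω A ≃ {f : A → Bool // IsBoolDHom s f} := Equiv.ofBijective ebar hbij
  have hc : Continuous eqv := hecont
  refine ⟨hc.homeoOfEquivCompactToT2, ?_⟩
  intro p q
  have he : ∀ p', (hc.homeoOfEquivCompactToT2 (Quot.mk (yequiv L Mf Ω A) p') : A → Bool)
      = φ p' := fun p' => hmkv p'
  rw [he p, he q]
  exact ⟨fun h a => (hE p q).1 h a, fun h => (hE p q).2 fun a => h a⟩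


end CoproductsPaper
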